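/- Let $X$ be a Banach lattice with the disjoint order Banach-Saks property: every norm bounded disjoint sequence in $X$ has a subsequence whose Cesàro sequence order converges in $X$. Then $X$ contains no disjoint positive norm bounded sequence equivalent (as a lattice-ordered basic sequence) to the standard unit vector basis of $\ell^1$; consequently $X^*$ is order continuous. -/

import Mathlib

open Filter Topology

/-- Cesàro sequence of `f`: `m ↦ (1/(m+1)) ∑_{n=0}^{m} f n`. -/
noncomputable def cesaro {X : Type*} [AddCommGroup X] [Module ℝ X] (f : ℕ → X) (m : ℕ) : X :=
  ((m : ℝ) + 1)⁻¹ • ∑ n ∈ Finset.range (m + 1), f n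

/-- Order convergence of a sequence. -/
def OrderConvergesTo {X : Type*} [Lattice X] [AddCommGroup X] (g : ℕ → X) (x : X) : Prop :=
  ∃ h : ℕ → X, Antitone h ∧ IsGLB (Set.range h) 0 ∧
    ∀ k : ℕ, ∃ N : ℕ, ∀ m ≥ N, |g m - x| ≤ h k

section Aux
variable {X : Type*} [NormedAddCommGroup X] [Lattice X] [HasSolidNorm X] [IsOrderedAddMonoid X] [NormedSpace ℝ X]

/-- subadditivity of inf for nonneg elements -/
lemma aux_inf_add (a b c : X) (ha : 0 ≤ a) (hb : 0 ≤ b) (hc : 0 ≤ c) :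
    a ⊓ (b + c) ≤ a ⊓ b + a ⊓ c := by
  have h1 : a ⊓ (b + c) ≤ (a ⊓ b) + c := by
    have h2 : a ⊓ (b + c) ≤ (a + c) ⊓ (b + c) :=
      le_inf (inf_le_left.trans (le_add_of_nonneg_right hc)) inf_le_right
    calc a ⊓ (b + c) ≤ (a + c) ⊓ (b + c) := h2
      _ = (a ⊓ b) + c := by rw [inf_add a b c]
  have h3 : a ⊓ (b + c) ≤ (a ⊓ b) + a :=
    inf_le_left.trans (le_add_of_nonneg_left (le_inf ha hb))
  calc a ⊓ (b + c) ≤ ((a ⊓ b) + a) ⊓ ((a ⊓ b) + c) := le_inf h3 h1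
    _ = (a ⊓ b) + (a ⊓ c) := by rw [add_inf a c (a ⊓ b)]

lemma aux_inf_sum_le {ι : Type*} (a : X) (ha : 0 ≤ a) (s : Finset ι) (g : ι → X)
    (hg : ∀ i ∈ s, 0 ≤ g i) : a ⊓ ∑ i ∈ s, g i ≤ ∑ i ∈ s, a ⊓ g i := by
  classical
  induction s using Finset.cons_induction with
  | empty => simpa using inf_le_right
  | cons i s his ih =>
      rw [Finset.sum_cons, Finset.sum_cons]
      have hgs : 0 ≤ ∑ j ∈ s, g j :=
        Finset.sum_nonneg (fun j hj => hg j (Finset.mem_cons_of_mem hj))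
      refine (aux_inf_add a (g i) _ ha (hg i (Finset.mem_cons_self i s)) hgs).trans ?_
      exact add_le_add_right (ih (fun j hj => hg j (Finset.mem_cons_of_mem hj))) _

lemma aux_sum_disjoint_le {ι : Type*} (s : Finset ι) (w : ι → X) (v : X) (hv : 0 ≤ v)
    (hw0 : ∀ i ∈ s, 0 ≤ w i) (hwv : ∀ i ∈ s, w i ≤ v)
    (hd : ∀ i ∈ s, ∀ j ∈ s, i ≠ j → w i ⊓ w j = 0) : ∑ i ∈ s, w i ≤ v := by
  classical
  induction s using Finset.cons_induction with
  | empty => simpa using hv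
  | cons i s his ih =>
      rw [Finset.sum_cons]
      have hmem : ∀ j ∈ s, j ∈ Finset.cons i s his := fun j hj => Finset.mem_cons_of_mem hj
      have hws : 0 ≤ ∑ j ∈ s, w j := Finset.sum_nonneg (fun j hj => hw0 j (hmem j hj))
      have hinf : w i ⊓ ∑ j ∈ s, w j = 0 := by
        refine le_antisymm ?_ (le_inf (hw0 i (Finset.mem_cons_self i s)) hws)
        refine (aux_inf_sum_le (w i) (hw0 i (Finset.mem_cons_self i s)) s w
          (fun j hj => hw0 j (hmem j hj))).trans ?_
        have : ∀ j ∈ s, w i ⊓ w j ≤ 0 := fun j hj =>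
          (hd i (Finset.mem_cons_self i s) j (hmem j hj)
            (fun h => his (h ▸ hj))).le
        simpa using Finset.sum_le_sum this
      have hsle : ∑ j ∈ s, w j ≤ v := ih (fun j hj => hw0 j (hmem j hj))
        (fun j hj => hwv j (hmem j hj))
        (fun j hj k hk hjk => hd j (hmem j hj) k (hmem k hk) hjk)
      have : w i + ∑ j ∈ s, w j = w i ⊔ ∑ j ∈ s, w j := by
        have := inf_add_sup (w i) (∑ j ∈ s, w j)
        rw [hinf, zero_add] at this
        exact this.symm
      rw [this]
      exact sup_le (hwv i (Finset.mem_cons_self i s)) hsle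

/-- cancel nsmul: if (n+1)•y is nonneg then y is nonneg -/
lemma aux_nsmul_nonneg_cancel (n : ℕ) (y : X) (h : 0 ≤ (n + 1) • y) : 0 ≤ y := by
  have hpq : y⁺ ⊓ y⁻ = 0 := posPart_inf_negPart_eq_zero y
  have hy : y⁺ - y⁻ = y := posPart_sub_negPart y
  have hp0 : (0:X) ≤ y⁺ := posPart_nonneg y
  have hq0 : (0:X) ≤ y⁻ := negPart_nonneg y
  -- (n+1)•y⁻ ≤ (n+1)•y⁺
  have hle : (n + 1) • y⁻ ≤ (n + 1) • y⁺ := by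
    have hyy : (n + 1) • y = (n + 1) • y⁺ - (n + 1) • y⁻ := by rw [← smul_sub, hy]
    rw [hyy] at h
    exact sub_nonneg.mp h
  -- disjointness of nsmuls
  have hd : ((n + 1) • y⁺) ⊓ ((n + 1) • y⁻) = 0 := by
    refine le_antisymm ?_ (le_inf (nsmul_nonneg hp0 _) (nsmul_nonneg hq0 _))
    have e1 : (n + 1) • y⁺ = ∑ _i ∈ Finset.range (n + 1), y⁺ := by
      simp [Finset.sum_const]
    have e2 : (n + 1) • y⁻ = ∑ _i ∈ Finset.range (n + 1), y⁻ := by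
      simp [Finset.sum_const]
    rw [e1, e2]
    refine (aux_inf_sum_le _ (Finset.sum_nonneg fun _ _ => hp0) _ _
      (fun _ _ => hq0)).trans ?_
    have : ∀ i ∈ Finset.range (n + 1),
        (∑ _i ∈ Finset.range (n + 1), y⁺) ⊓ y⁻ ≤ 0 := by
      intro i _
      rw [inf_comm]
      refine (aux_inf_sum_le _ hq0 _ _ (fun _ _ => hp0)).trans ?_
      have : ∀ j ∈ Finset.range (n + 1), y⁻ ⊓ y⁺ ≤ 0 := by
        intro j _
        rw [inf_comm, hpq]
      simpa using Finset.sum_le_sum this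
    simpa using Finset.sum_le_sum this
  have : (n + 1) • y⁻ ≤ 0 := by
    have := le_inf hle (le_refl ((n + 1) • y⁻))
    rw [inf_comm] at hd
    calc (n+1) • y⁻ ≤ ((n+1) • y⁻) ⊓ ((n+1) • y⁺) := le_inf le_rfl hle
      _ = 0 := hd
  have hq : y⁻ ≤ 0 := by
    have h2 : y⁻ ≤ (n + 1) • y⁻ := by
      rw [succ_nsmul]
      exact le_add_of_nonneg_left (nsmul_nonneg hq0 n)
    exact h2.trans this
  have hq' : y⁻ = 0 := le_antisymm hq hq0
  rw [← hy, hq', sub_zero]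
  exact hp0

/-- nonneg rational smul preserves positivity -/
lemma aux_ratsmul_nonneg (p q : ℕ) (x : X) (hx : 0 ≤ x) :
    0 ≤ ((p : ℝ) / ((q : ℝ) + 1)) • x := by
  apply aux_nsmul_nonneg_cancel q
  have : (q + 1) • (((p : ℝ) / ((q : ℝ) + 1)) • x) = (p : ℝ) • x := by
    rw [← Nat.cast_smul_eq_nsmul ℝ (q + 1), smul_smul]
    congr 1
    push_cast
    field_simp
  rw [this, Nat.cast_smul_eq_nsmul ℝ p x]
  exact nsmul_nonneg hx p

lemma aux_inv_smul_nonneg (q : ℕ) (x : X) (hx : 0 ≤ x) : 0 ≤ ((q : ℝ) + 1)⁻¹ • x := by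
  simpa [one_div] using aux_ratsmul_nonneg 1 q x hx

lemma aux_inv_smul_le (q : ℕ) (x : X) (hx : 0 ≤ x) : ((q : ℝ) + 1)⁻¹ • x ≤ x := by
  have h := aux_ratsmul_nonneg q q x hx
  have hco : ((q : ℝ) / ((q : ℝ) + 1)) = 1 - ((q : ℝ) + 1)⁻¹ := by
    have hne : ((q:ℝ) + 1) ≠ 0 := by positivity
    field_simp
    ring
  rw [hco, sub_smul, one_smul] at h
  exact sub_nonneg.mp h

lemma aux_abs_inv_smul_le (q : ℕ) (e : X) :
    |((q : ℝ) + 1)⁻¹ • e| ≤ ((q : ℝ) + 1)⁻¹ • |e| := by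
  refine sup_le ?_ ?_
  · have h := aux_inv_smul_nonneg q (|e| - e) (sub_nonneg.mpr (le_abs_self e))
    rw [smul_sub] at h
    exact sub_nonneg.mp h
  · have h := aux_inv_smul_nonneg q (|e| + e) (neg_le_iff_add_nonneg.mp (neg_le_abs e))
    rw [smul_add] at h
    rw [neg_le_iff_add_nonneg]
    exact h

lemma aux_abs_sum_le {ι : Type*} (s : Finset ι) (g : ι → X) :
    |∑ i ∈ s, g i| ≤ ∑ i ∈ s, |g i| := by
  classical
  induction s using Finset.cons_induction with
  | empty => simp
  | cons i s his ih =>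
      rw [Finset.sum_cons, Finset.sum_cons]
      exact (abs_add_le (g i) (∑ j ∈ s, g j)).trans (add_le_add_right ih _)

end Aux

section Main
variable {X : Type*} [NormedAddCommGroup X] [Lattice X] [HasSolidNorm X] [IsOrderedAddMonoid X] [NormedSpace ℝ X]

lemma cesaro_expand (E : ℕ → X) (m : ℕ) :
    cesaro E m = ∑ n ∈ Finset.range (m + 1), ((m : ℝ) + 1)⁻¹ • E n := by
  rw [cesaro, Finset.smul_sum]

lemma cesaro_nonneg (E : ℕ → X) (hE0 : ∀ j, 0 ≤ E j) (m : ℕ) : 0 ≤ cesaro E m := by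
  rw [cesaro_expand]
  exact Finset.sum_nonneg fun n _ => aux_inv_smul_nonneg m (E n) (hE0 n)

lemma eventual_le (E : ℕ → X) (hE0 : ∀ j, 0 ≤ E j)
    (hEd : ∀ i j, i ≠ j → E i ⊓ E j = 0)
    (x : X) (h : ℕ → X) (hanti : Antitone h) (hglb : IsGLB (Set.range h) 0)
    (happ : ∀ k, ∃ N, ∀ m ≥ N, |cesaro E m - x| ≤ h k) :
    ∃ N, ∀ m ≥ N, cesaro E m ≤ h 0 := by
  have hk0 : ∀ k, (0:X) ≤ h k := fun k => hglb.1 ⟨k, rfl⟩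
  have hC0 : ∀ m, 0 ≤ cesaro E m := cesaro_nonneg E hE0
  -- inf with a single element
  have hinfE : ∀ (m j : ℕ), E j ⊓ cesaro E m ≤ ((m : ℝ) + 1)⁻¹ • E j := by
    intro m j
    rw [cesaro_expand]
    refine (aux_inf_sum_le (E j) (hE0 j) _ _
      (fun n _ => aux_inv_smul_nonneg m (E n) (hE0 n))).trans ?_
    have hterm : ∀ n ∈ Finset.range (m + 1),
        E j ⊓ ((m : ℝ) + 1)⁻¹ • E n ≤
          if n = j then ((m : ℝ) + 1)⁻¹ • E j else 0 := by
      intro n _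
      by_cases hnj : n = j
      · subst hnj; simp only [if_pos rfl]; exact inf_le_right
      · rw [if_neg hnj]
        have h1 : E j ⊓ ((m : ℝ) + 1)⁻¹ • E n ≤ E j ⊓ E n :=
          inf_le_inf_left _ (aux_inv_smul_le m (E n) (hE0 n))
        exact h1.trans_eq (hEd j n (fun hh => hnj hh.symm))
    refine (Finset.sum_le_sum hterm).trans ?_
    rw [Finset.sum_ite_eq' (Finset.range (m + 1)) j]
    by_cases hj : j ∈ Finset.range (m + 1)
    · rw [if_pos hj]
    · rw [if_neg hj]; exact aux_inv_smul_nonneg m (E j) (hE0 j)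
  -- (x ⊔ 0) is disjoint from each E j
  have hxE : ∀ j, (x ⊔ 0) ⊓ E j = 0 := by
    intro j
    refine le_antisymm ?_ (le_inf le_sup_right (hE0 j))
    have hkk : ∀ k, (x ⊔ 0) ⊓ E j ≤ h k := by
      intro k
      obtain ⟨N, hN⟩ := happ k
      have hev : ∀ m ≥ N, (x ⊔ 0) ⊓ E j ≤ ((m : ℝ) + 1)⁻¹ • E j + h k := by
        intro m hm
        have hb := hN m hm
        have h1 : x ≤ cesaro E m + h k := by
          have h2 : x - cesaro E m ≤ h k := by
            have := le_abs_self (x - cesaro E m)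
            rw [abs_sub_comm] at this
            exact this.trans hb
          exact (sub_le_iff_le_add.mp h2).trans_eq (add_comm _ _)
        have h2 : x ⊔ 0 ≤ cesaro E m + h k :=
          sup_le h1 (add_nonneg (hC0 m) (hk0 k))
        calc (x ⊔ 0) ⊓ E j ≤ (cesaro E m + h k) ⊓ E j := inf_le_inf_right _ h2
          _ = E j ⊓ (cesaro E m + h k) := inf_comm _ _
          _ ≤ E j ⊓ cesaro E m + E j ⊓ h k :=
              aux_inf_add (E j) _ _ (hE0 j) (hC0 m) (hk0 k)
          _ ≤ ((m : ℝ) + 1)⁻¹ • E j + h k :=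
              add_le_add (hinfE m j) inf_le_right
      have hlim : Tendsto (fun m : ℕ => ((m : ℝ) + 1)⁻¹ • E j + h k)
          atTop (𝓝 (h k)) := by
        have t1 : Tendsto (fun m : ℕ => ((m : ℝ) + 1)⁻¹) atTop (𝓝 0) := by
          simpa [one_div] using tendsto_one_div_add_atTop_nhds_zero_nat (𝕜 := ℝ)
        have t2 := (t1.smul_const (E j)).add (tendsto_const_nhds : Tendsto (fun _ : ℕ => h k) atTop (𝓝 (h k)))
        simpa using t2
      exact ge_of_tendsto hlim (eventually_atTop.2 ⟨N, hev⟩)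
    have : (x ⊔ 0) ⊓ E j ∈ lowerBounds (Set.range h) := by
      rintro z ⟨k, rfl⟩; exact hkk k
    exact hglb.2 this
  -- (x ⊔ 0) disjoint from cesaro
  have hxC : ∀ m, cesaro E m ⊓ (x ⊔ 0) = 0 := by
    intro m
    have hx0 : (0:X) ≤ x ⊔ 0 := le_sup_right
    refine le_antisymm ?_ (le_inf (hC0 m) hx0)
    rw [inf_comm, cesaro_expand]
    refine (aux_inf_sum_le (x ⊔ 0) hx0 _ _
      (fun n _ => aux_inv_smul_nonneg m (E n) (hE0 n))).trans ?_
    have : ∀ n ∈ Finset.range (m + 1), (x ⊔ 0) ⊓ ((m : ℝ) + 1)⁻¹ • E n ≤ 0 := by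
      intro n _
      have h1 : (x ⊔ 0) ⊓ ((m : ℝ) + 1)⁻¹ • E n ≤ (x ⊔ 0) ⊓ E n :=
        inf_le_inf_left _ (aux_inv_smul_le m (E n) (hE0 n))
      rw [hxE n] at h1; exact h1
    simpa using Finset.sum_le_sum this
  obtain ⟨N0, hN0⟩ := happ 0
  refine ⟨N0, fun m hm => ?_⟩
  have h1 : cesaro E m ≤ (x ⊔ 0) + h 0 := by
    have h2 : cesaro E m - x ≤ h 0 := (le_abs_self _).trans (hN0 m hm)
    have h3 : cesaro E m ≤ x + h 0 := (sub_le_iff_le_add.mp h2).trans_eq (add_comm _ _)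
    exact h3.trans (add_le_add_left le_sup_left _)
  have h2 : cesaro E m = cesaro E m ⊓ ((x ⊔ 0) + h 0) := (inf_eq_left.2 h1).symm
  calc cesaro E m = cesaro E m ⊓ ((x ⊔ 0) + h 0) := h2
    _ ≤ cesaro E m ⊓ (x ⊔ 0) + cesaro E m ⊓ h 0 :=
        aux_inf_add _ _ _ (hC0 m) le_sup_right (hk0 0)
    _ = cesaro E m ⊓ h 0 := by rw [hxC m, zero_add]
    _ ≤ h 0 := inf_le_right

end Main

section Master
variable {X : Type*} [NormedAddCommGroup X] [Lattice X] [HasSolidNorm X] [IsOrderedAddMonoid X] [NormedSpace ℝ X]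

lemma master (E : ℕ → X) (hE0 : ∀ j, 0 ≤ E j)
    (hEd : ∀ i j, i ≠ j → E i ⊓ E j = 0)
    (v : X) (hv : 0 ≤ v) (N : ℕ) (hC : ∀ m ≥ N, cesaro E m ≤ v) (r : ℕ) :
    ∃ (s : Finset ℕ) (b : ℕ → ℝ), (∀ j, ∃ q : ℕ, b j = ((q : ℝ) + 1)⁻¹) ∧
      ((r : ℝ) / 3 ≤ ∑ j ∈ s, b j) ∧ (∑ j ∈ s, b j • E j ≤ v) := by
  classical
  set M : ℕ → ℕ := fun i => (N + 1) * 2 ^ i with hM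
  have hMmono : StrictMono M := fun i i' hii => by
    simp only [hM]
    exact (Nat.mul_lt_mul_left (Nat.succ_pos N)).mpr (Nat.pow_lt_pow_right one_lt_two hii)
  have hex : ∀ j : ℕ, ∃ i, j ≤ M i := by
    intro j
    refine ⟨j, le_of_lt (lt_of_lt_of_le (j.lt_two_pow_self) ?_)⟩
    simp only [hM]
    exact Nat.le_mul_of_pos_left _ (Nat.succ_pos N)
  set b : ℕ → ℝ := fun j => ((M (Nat.find (hex j)) : ℝ) + 1)⁻¹ with hb
  set B : ℕ → Finset ℕ := fun i => Finset.Ico (M (i - 1) + 1) (M i + 1) with hB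
  set s : Finset ℕ := (Finset.Icc 1 r).biUnion B with hs
  have hform : ∀ j, ∃ q : ℕ, b j = ((q : ℝ) + 1)⁻¹ :=
    fun j => ⟨M (Nat.find (hex j)), rfl⟩
  have hb0 : ∀ j, 0 ≤ b j := by
    intro j; rw [hb]; positivity
  -- value of b on a block
  have hbB : ∀ i, 1 ≤ i → ∀ j ∈ B i, b j = ((M i : ℝ) + 1)⁻¹ := by
    intro i hi j hj
    simp only [hB, Finset.mem_Ico] at hj
    have hfind : Nat.find (hex j) = i := by
      rw [Nat.find_eq_iff]
      refine ⟨Nat.lt_succ_iff.mp hj.2, fun k hk => ?_⟩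
      push_neg
      have h1 : M k ≤ M (i - 1) := hMmono.monotone (Nat.le_sub_one_of_lt hk)
      exact lt_of_le_of_lt h1 (Nat.lt_of_succ_le hj.1)
    rw [hb]
    simp only [hfind]
  -- blocks are pairwise disjoint
  have hBdisj : ∀ i i', i < i' → 1 ≤ i → Disjoint (B i) (B i') := by
    intro i i' hii _
    rw [Finset.disjoint_left]
    intro j hj hj'
    simp only [hB, Finset.mem_Ico] at hj hj'
    have h1 : j ≤ M i := Nat.lt_succ_iff.mp hj.2
    have h2 : M (i' - 1) < j := Nat.lt_of_succ_le hj'.1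
    have h3 : M i ≤ M (i' - 1) := hMmono.monotone (Nat.le_sub_one_of_lt hii)
    omega
  have hBdisj' : ∀ i ∈ Finset.Icc 1 r, ∀ i' ∈ Finset.Icc 1 r, i ≠ i' →
      Disjoint (B i) (B i') := by
    intro i hi i' hi' hne
    rcases lt_or_gt_of_ne hne with h | h
    · exact hBdisj i i' h (Finset.mem_Icc.mp hi).1
    · exact (hBdisj i' i h (Finset.mem_Icc.mp hi').1).symm
  -- block sums
  set w : ℕ → X := fun i => ∑ j ∈ B i, b j • E j with hw
  have hterm0 : ∀ j, 0 ≤ b j • E j := by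
    intro j
    obtain ⟨q, hq⟩ := hform j
    rw [hq]
    exact aux_inv_smul_nonneg q (E j) (hE0 j)
  have htermle : ∀ j, b j • E j ≤ E j := by
    intro j
    obtain ⟨q, hq⟩ := hform j
    rw [hq]
    exact aux_inv_smul_le q (E j) (hE0 j)
  have hw0 : ∀ i, 0 ≤ w i := fun i => Finset.sum_nonneg fun j _ => hterm0 j
  have hwv : ∀ i, 1 ≤ i → w i ≤ v := by
    intro i hi
    have hMN : N ≤ M i := by
      have : N + 1 ≤ (N + 1) * 2 ^ i := Nat.le_mul_of_pos_right _ (by positivity)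
      simp only [hM]; omega
    have hsub : B i ⊆ Finset.range (M i + 1) := by
      intro j hj
      simp only [hB, Finset.mem_Ico] at hj
      exact Finset.mem_range.mpr hj.2
    have heq : w i = ∑ j ∈ B i, ((M i : ℝ) + 1)⁻¹ • E j :=
      Finset.sum_congr rfl fun j hj => by rw [hbB i hi j hj]
    have hle : w i ≤ ∑ n ∈ Finset.range (M i + 1), ((M i : ℝ) + 1)⁻¹ • E n := by
      rw [heq]
      exact Finset.sum_le_sum_of_subset_of_nonneg hsub
        (fun n _ _ => aux_inv_smul_nonneg (M i) (E n) (hE0 n))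
    exact hle.trans ((cesaro_expand E (M i)).symm ▸ hC (M i) hMN)
  -- pairwise disjointness of block sums
  have hwd : ∀ i ∈ Finset.Icc 1 r, ∀ i' ∈ Finset.Icc 1 r, i ≠ i' → w i ⊓ w i' = 0 := by
    intro i hi i' hi' hne
    have hcross : ∀ j ∈ B i, ∀ j' ∈ B i', (b j • E j) ⊓ (b j' • E j') ≤ 0 := by
      intro j hj j' hj'
      have hjj : j ≠ j' := by
        intro hEq
        exact (Finset.disjoint_left.mp (hBdisj' i hi i' hi' hne) hj) (hEq ▸ hj')
      calc (b j • E j) ⊓ (b j' • E j') ≤ E j ⊓ E j' :=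
            inf_le_inf (htermle j) (htermle j')
        _ = 0 := hEd j j' hjj
    refine le_antisymm ?_ (le_inf (hw0 i) (hw0 i'))
    rw [inf_comm]
    refine (aux_inf_sum_le (w i') (hw0 i') (B i) _ (fun j _ => hterm0 j)).trans ?_
    have : ∀ j ∈ B i, w i' ⊓ (b j • E j) ≤ 0 := by
      intro j hj
      rw [inf_comm, hw]
      refine (aux_inf_sum_le (b j • E j) (hterm0 j) (B i') _ (fun j' _ => hterm0 j')).trans ?_
      have h2 : ∀ j' ∈ B i', (b j • E j) ⊓ (b j' • E j') ≤ 0 := fun j' hj' =>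
        hcross j hj j' hj'
      simpa using Finset.sum_le_sum h2
    simpa using Finset.sum_le_sum this
  -- the total sum is ≤ v
  have hsum_le : ∑ j ∈ s, b j • E j ≤ v := by
    rw [hs, Finset.sum_biUnion hBdisj']
    exact aux_sum_disjoint_le _ w v hv (fun i _ => hw0 i)
      (fun i hi => hwv i (Finset.mem_Icc.mp hi).1) hwd
  -- the mass is at least r/3
  have hmass : (r : ℝ) / 3 ≤ ∑ j ∈ s, b j := by
    rw [hs, Finset.sum_biUnion hBdisj']
    have hblock : ∀ i ∈ Finset.Icc 1 r, (1:ℝ)/3 ≤ ∑ j ∈ B i, b j := by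
      intro i hi
      have hi1 : 1 ≤ i := (Finset.mem_Icc.mp hi).1
      have heq : ∑ j ∈ B i, b j = (B i).card • ((M i : ℝ) + 1)⁻¹ := by
        rw [← Finset.sum_const]
        exact Finset.sum_congr rfl fun j hj => hbB i hi1 j hj
      have hcard : (B i).card = M i - M (i - 1) := by
        simp only [hB, Nat.card_Ico]; omega
      have hMle : M (i - 1) ≤ M i := hMmono.monotone (Nat.sub_le i 1)
      -- key numeric bound
      have hKpos : 1 ≤ (N + 1) * 2 ^ (i - 1) := Nat.one_le_iff_ne_zero.mpr (by positivity)
      have hMi : M i = 2 * ((N + 1) * 2 ^ (i - 1)) := by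
        simp only [hM]
        have : 2 ^ i = 2 * 2 ^ (i - 1) := by
          rw [← pow_succ']
          congr 1
          omega
        rw [this]; ring
      have hdiff : M i - M (i - 1) = (N + 1) * 2 ^ (i - 1) := by
        simp only [hM]
        have h2 : (2:ℕ) ^ i = 2 * 2 ^ (i - 1) := by
          rw [← pow_succ']; congr 1; omega
        rw [h2]; ring_nf; omega
      rw [heq, hcard, hdiff]
      set K : ℕ := (N + 1) * 2 ^ (i - 1) with hK
      have hMi' : (M i : ℝ) + 1 = 2 * (K : ℝ) + 1 := by
        rw [hMi]; push_cast; ring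
      rw [hMi', nsmul_eq_mul]
      have hK1 : (1:ℝ) ≤ (K:ℝ) := by exact_mod_cast hKpos
      have hpos : (0:ℝ) < 2 * (K:ℝ) + 1 := by linarith
      have hrw : (K:ℝ) * (2 * (K:ℝ) + 1)⁻¹ = (K:ℝ) / (2 * (K:ℝ) + 1) :=
        (div_eq_mul_inv _ _).symm
      rw [hrw, div_le_div_iff₀ (by norm_num : (0:ℝ) < 3) hpos]
      linarith
    have h1 : ∑ i ∈ Finset.Icc 1 r, (1:ℝ)/3 ≤
        ∑ i ∈ Finset.Icc 1 r, ∑ j ∈ B i, b j := Finset.sum_le_sum hblock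
    have h2 : ∑ i ∈ Finset.Icc 1 r, (1:ℝ)/3 = (r:ℝ)/3 := by
      rw [Finset.sum_const, Nat.card_Icc]
      simp [nsmul_eq_mul]
      ring
    rw [← h2]
    exact h1
  exact ⟨s, b, hform, hmass, hsum_le⟩

end Master


/-- If the Banach lattice `X` has the disjoint order Banach–Saks property, then `X` contains
no norm bounded disjoint positive sequence equivalent to the unit vector basis of `ℓ¹`;
consequently `X*` is order continuous (expressed, via Meyer-Nieberg's characterization, as:
every norm bounded disjoint sequence in `X` is weakly null). -/
theorem stmt12 {X : Type*} [NormedAddCommGroup X] [Lattice X] [HasSolidNorm X] [IsOrderedAddMonoid X] [NormedSpace ℝ X] [CompleteSpace X]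
    (hdoBSP : ∀ f : ℕ → X, (∃ C : ℝ, ∀ n, ‖f n‖ ≤ C) →
      (∀ n m, n ≠ m → |f n| ⊓ |f m| = 0) →
      ∃ σ : ℕ → ℕ, StrictMono σ ∧ ∃ x : X, OrderConvergesTo (cesaro (f ∘ σ)) x) :
    (¬ ∃ f : ℕ → X, (∀ n, 0 ≤ f n) ∧ (∀ n m, n ≠ m → f n ⊓ f m = 0) ∧
        (∃ C : ℝ, ∀ n, ‖f n‖ ≤ C) ∧
        (∃ c : ℝ, 0 < c ∧ ∃ C' : ℝ, ∀ (s : Finset ℕ) (a : ℕ → ℝ),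
          c * ∑ n ∈ s, |a n| ≤ ‖∑ n ∈ s, a n • f n‖ ∧
          ‖∑ n ∈ s, a n • f n‖ ≤ C' * ∑ n ∈ s, |a n|)) ∧
    (∀ f : ℕ → X, (∃ C : ℝ, ∀ n, ‖f n‖ ≤ C) → (∀ n m, n ≠ m → |f n| ⊓ |f m| = 0) →
      ∀ g : X →L[ℝ] ℝ, Tendsto (fun n => g (f n)) atTop (𝓝 0)) := by
  constructor
  · -- Part 1: no ℓ¹ disjoint positive sequence
    rintro ⟨f, hf0, hfd, ⟨C, hCb⟩, c, hc, C', hl⟩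
    have hdisj' : ∀ n m, n ≠ m → |f n| ⊓ |f m| = 0 := by
      intro n m hnm
      rw [abs_of_nonneg (hf0 n), abs_of_nonneg (hf0 m)]
      exact hfd n m hnm
    obtain ⟨σ, hσ, x, h, hanti, hglb, happ⟩ := hdoBSP f ⟨C, hCb⟩ hdisj'
    set E : ℕ → X := f ∘ σ with hE
    have hE0 : ∀ j, 0 ≤ E j := fun j => hf0 (σ j)
    have hEd : ∀ i j, i ≠ j → E i ⊓ E j = 0 := fun i j hij =>
      hfd (σ i) (σ j) (fun hh => hij (hσ.injective hh))
    obtain ⟨N, hN⟩ := eventual_le E hE0 hEd x h hanti hglb happ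
    have hv : (0:X) ≤ h 0 := hglb.1 ⟨0, rfl⟩
    obtain ⟨r, hr⟩ := exists_nat_gt (3 * ‖h 0‖ / c)
    obtain ⟨s, b, hform, hmass, hSv⟩ := master E hE0 hEd (h 0) hv N hN r
    have hb0 : ∀ j, 0 ≤ b j := by
      intro j; obtain ⟨q, hq⟩ := hform j; rw [hq]; positivity
    set S : X := ∑ j ∈ s, b j • E j with hSdefS
    have hS0 : 0 ≤ S := Finset.sum_nonneg fun j _ => by
      obtain ⟨q, hq⟩ := hform j
      rw [hq]; exact aux_inv_smul_nonneg q (E j) (hE0 j)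
    have hnormS : ‖S‖ ≤ ‖h 0‖ := by
      apply HasSolidNorm.solid
      rw [abs_of_nonneg hS0, abs_of_nonneg hv]
      exact hSv
    -- transfer via σ
    set a : ℕ → ℝ := Function.extend σ b (fun _ => 0) with ha
    have haσ : ∀ j, a (σ j) = b j := fun j => hσ.injective.extend_apply b _ j
    have hinj : Set.InjOn σ ↑s := fun u _ w _ huw => hσ.injective huw
    have h1 : ∑ n ∈ s.image σ, a n • f n = S := by
      rw [Finset.sum_image hinj]
      exact Finset.sum_congr rfl fun j _ => by rw [haσ j]; rfl
    have h2 : ∑ n ∈ s.image σ, |a n| = ∑ j ∈ s, b j := by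
      rw [Finset.sum_image hinj]
      exact Finset.sum_congr rfl fun j _ => by rw [haσ j, abs_of_nonneg (hb0 j)]
    have hlow := (hl (s.image σ) a).1
    rw [h1, h2] at hlow
    have hchain : c * ((r:ℝ)/3) ≤ ‖h 0‖ := by
      calc c * ((r:ℝ)/3) ≤ c * ∑ j ∈ s, b j :=
            mul_le_mul_of_nonneg_left hmass hc.le
        _ ≤ ‖S‖ := hlow
        _ ≤ ‖h 0‖ := hnormS
    rw [div_lt_iff₀ hc] at hr
    have : c * ((r:ℝ)/3) = (r:ℝ) * c / 3 := by ring
    rw [this] at hchain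
    have : 3 * ‖h 0‖ < 3 * ‖h 0‖ := by
      calc 3 * ‖h 0‖ < (r:ℝ) * c := hr
        _ ≤ 3 * ‖h 0‖ := by linarith
    exact lt_irrefl _ this
  · -- Part 2: weakly null
    intro f hbdd hdisj g
    by_contra hnot
    rw [Metric.tendsto_atTop] at hnot
    push_neg at hnot
    obtain ⟨ε, hε, hfreq⟩ := hnot
    simp only [Real.dist_eq, sub_zero] at hfreq
    obtain ⟨C, hCb⟩ := hbdd
    -- key claim for a functional with frequently large values
    have key : ∀ g' : X →L[ℝ] ℝ, (∃ᶠ n in atTop, ε ≤ g' (f n)) → False := by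
      intro g' hg'
      obtain ⟨τ, hτ, hτε⟩ := Filter.extraction_of_frequently_atTop hg'
      set F : ℕ → X := fun n => |f (τ n)| with hF
      have hFb : ∃ C : ℝ, ∀ n, ‖F n‖ ≤ C :=
        ⟨C, fun n => by rw [hF]; rw [norm_abs_eq_norm]; exact hCb (τ n)⟩
      have hFd : ∀ n m, n ≠ m → |F n| ⊓ |F m| = 0 := by
        intro n m hnm
        simp only [hF, abs_abs]
        exact hdisj (τ n) (τ m) (fun hh => hnm (hτ.injective hh))
      obtain ⟨σ, hσ, x, h, hanti, hglb, happ⟩ := hdoBSP F hFb hFd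
      set E : ℕ → X := F ∘ σ with hE
      set e : ℕ → X := fun j => f (τ (σ j)) with he
      have hEe : ∀ j, E j = |e j| := fun j => rfl
      have hE0 : ∀ j, 0 ≤ E j := fun j => abs_nonneg _
      have hEd : ∀ i j, i ≠ j → E i ⊓ E j = 0 := by
        intro i j hij
        have := hdisj (τ (σ i)) (τ (σ j))
          (fun hh => hij (hσ.injective (hτ.injective hh)))
        simpa [hEe] using this
      obtain ⟨N, hN⟩ := eventual_le E hE0 hEd x h hanti hglb happ
      have hv : (0:X) ≤ h 0 := hglb.1 ⟨0, rfl⟩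
      obtain ⟨r, hr⟩ := exists_nat_gt (3 * (‖g'‖ * ‖h 0‖) / ε)
      obtain ⟨s, b, hform, hmass, hSv⟩ := master E hE0 hEd (h 0) hv N hN r
      have hb0 : ∀ j, 0 ≤ b j := by
        intro j; obtain ⟨q, hq⟩ := hform j; rw [hq]; positivity
      set S : X := ∑ j ∈ s, b j • E j with hSdef
      set T : X := ∑ j ∈ s, b j • e j with hTdef
      have hS0 : 0 ≤ S := Finset.sum_nonneg fun j _ => by
        obtain ⟨q, hq⟩ := hform j
        rw [hq]; exact aux_inv_smul_nonneg q (E j) (hE0 j)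
      have habsT : |T| ≤ S := by
        refine (aux_abs_sum_le s (fun j => b j • e j)).trans ?_
        refine Finset.sum_le_sum fun j _ => ?_
        obtain ⟨q, hq⟩ := hform j
        rw [hq, hEe j]
        exact aux_abs_inv_smul_le q (e j)
      have hnormT : ‖T‖ ≤ ‖h 0‖ := by
        apply HasSolidNorm.solid
        calc |T| ≤ S := habsT
          _ ≤ h 0 := hSv
          _ = |h 0| := (abs_of_nonneg hv).symm
      have hgT : ε * ((r:ℝ)/3) ≤ g' T := by
        have hmap : g' T = ∑ j ∈ s, b j * g' (e j) := by
          rw [hTdef, map_sum]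
          exact Finset.sum_congr rfl fun j _ => by
            rw [ContinuousLinearMap.map_smul, smul_eq_mul]
        have hterm : ∀ j ∈ s, b j * ε ≤ b j * g' (e j) := fun j _ =>
          mul_le_mul_of_nonneg_left (hτε (σ j)) (hb0 j)
        calc ε * ((r:ℝ)/3) ≤ ε * ∑ j ∈ s, b j :=
              mul_le_mul_of_nonneg_left hmass hε.le
          _ = ∑ j ∈ s, b j * ε := by rw [Finset.mul_sum]; exact Finset.sum_congr rfl fun j _ => mul_comm _ _
          _ ≤ ∑ j ∈ s, b j * g' (e j) := Finset.sum_le_sum hterm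
          _ = g' T := hmap.symm
      have hup : g' T ≤ ‖g'‖ * ‖h 0‖ := by
        calc g' T ≤ |g' T| := le_abs_self _
          _ = ‖g' T‖ := (Real.norm_eq_abs _).symm
          _ ≤ ‖g'‖ * ‖T‖ := g'.le_opNorm T
          _ ≤ ‖g'‖ * ‖h 0‖ := mul_le_mul_of_nonneg_left hnormT (norm_nonneg _)
      rw [div_lt_iff₀ hε] at hr
      have h1 : ε * ((r:ℝ)/3) = (r:ℝ) * ε / 3 := by ring
      rw [h1] at hgT
      have := hgT.trans hup
      linarith
    -- find a frequently-large subsequence for g or -g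
    have hfreq' : ∃ᶠ n in atTop, ε ≤ |g (f n)| := Filter.frequently_atTop.2 hfreq
    have hsplit : (∃ᶠ n in atTop, ε ≤ g (f n)) ∨ (∃ᶠ n in atTop, ε ≤ -(g (f n))) := by
      rw [← Filter.frequently_or_distrib]
      refine hfreq'.mono fun n hn => ?_
      rcases abs_cases (g (f n)) with ⟨hh, _⟩ | ⟨hh, _⟩
      · left; rw [← hh]; exact hn
      · right; rw [← hh]; exact hn
    rcases hsplit with hcase | hcase
    · exact key g hcase
    · refine key (-g) ?_
      refine hcase.mono fun n hn => ?_
      simpa using hn
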